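/- Let p be a prime and n = rk with r, k > 1. Let L be an F_{p^k}-linear permutation of F_{p^n}, let f : F_{p^n} → F_{p^k}, h : F_{p^k} → F_{p^k}, γ ∈ F_{p^n}^*, and b ∈ F_{p^k}, and assume γ is a b-linear translator of f. Then F(x) = L(x) + L(γ)·h(f(x)) permutes F_{p^n} if and only if the map g : u ↦ u + b·h(u) permutes F_{p^k}. -/

import Mathlib

/-- `γ` is a `b`-linear translator of `f : F_{p^n} → F_{p^k}` (the subfield `F_{p^k}`
is realized as `{u : F | u ^ p ^ k = u}`). -/
def IsLinearTranslator (p k : ℕ) {F : Type*} [Field F] (f : F → F) (γ b : F) : Prop :=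
  ∀ x u : F, u ^ p ^ k = u → f (x + u * γ) - f x = u * b

/-- **Theorem 2.4 (Kyureghyan).** Let `n = rk` with `r, k > 1`, `L` an `F_{p^k}`-linear
permutation of `F_{p^n}`, `f : F_{p^n} → F_{p^k}`, `h : F_{p^k} → F_{p^k}`,
`γ ∈ F_{p^n}^*` a `b`-linear translator of `f`.  Then `F(x) = L(x) + L(γ)·h(f(x))`
permutes `F_{p^n}` iff `g : u ↦ u + b·h(u)` permutes `F_{p^k}`. -/
theorem stmt_2 {p k r n : ℕ} (hp : p.Prime) (hk : 1 < k) (hr : 1 < r) (hn : n = r * k)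
    {F : Type*} [Field F] [Fintype F] (hcard : Fintype.card F = p ^ n)
    (L : F → F) (lam : Fin r → F)
    (hL : ∀ x, L x = ∑ i : Fin r, lam i * x ^ p ^ (k * (i : ℕ)))
    (hLbij : Function.Bijective L)
    (f h : F → F) (hf : ∀ x, f x ^ p ^ k = f x)
    (hh : ∀ u : F, u ^ p ^ k = u → h u ^ p ^ k = h u)
    (γ : F) (hγ : γ ≠ 0) (b : F) (hb : b ^ p ^ k = b)
    (htr : IsLinearTranslator p k f γ b) :
    Function.Bijective (fun x : F => L x + L γ * h (f x)) ↔
      Set.BijOn (fun u : F => u + b * h u)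
        {u : F | u ^ p ^ k = u} {u : F | u ^ p ^ k = u} := by
  have hn0 : 0 < n := by rw [hn]; exact Nat.mul_pos (by omega) (by omega)
  -- characteristic
  have hpF : (p : F) = 0 := by
    have h1 : ((Fintype.card F : ℕ) : F) = 0 := Nat.cast_card_eq_zero F
    rw [hcard, Nat.cast_pow] at h1
    exact pow_eq_zero_iff hn0.ne' |>.mp h1
  have hchar : CharP F p := (CharP.charP_iff_prime_eq_zero hp).2 hpF
  haveI : Fact p.Prime := ⟨hp⟩
  haveI := hchar
  set S : Set F := {u : F | u ^ p ^ k = u} with hS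
  -- closure facts
  have hSmul : ∀ u v : F, u ∈ S → v ∈ S → u * v ∈ S := fun u v hu hv => by
    simp only [hS, Set.mem_setOf_eq] at *
    rw [mul_pow, hu, hv]
  -- u ∈ S implies u ^ (p ^ (k * i)) = u
  have hiter : ∀ u : F, u ∈ S → ∀ i : ℕ, u ^ p ^ (k * i) = u := by
    intro u hu i
    induction i with
    | zero => simp
    | succ i ih =>
        have : p ^ (k * (i + 1)) = p ^ (k * i) * p ^ k := by ring
        rw [this, pow_mul, ih, hu]
  -- L is additive and S-semilinear
  have hLadd : ∀ x y : F, L (x + y) = L x + L y := by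
    intro x y
    simp only [hL, ← Finset.sum_add_distrib]
    refine Finset.sum_congr rfl fun i _ => ?_
    rw [add_pow_char_pow, mul_add]
  have hLsmul : ∀ u x : F, u ∈ S → L (u * x) = u * L x := by
    intro u x hu
    simp only [hL, Finset.mul_sum]
    refine Finset.sum_congr rfl fun i _ => ?_
    rw [mul_pow, hiter u hu i]
    ring
  -- membership facts
  have hfS : ∀ x, f x ∈ S := hf
  have hhS : ∀ u, u ∈ S → h u ∈ S := hh
  have hbS : b ∈ S := hb
  set G : F → F := fun x => x + h (f x) * γ with hG
  -- the key factorization : F = L ∘ G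
  have hkey : (fun x : F => L x + L γ * h (f x)) = L ∘ G := by
    funext x
    simp only [hG, Function.comp_apply]
    rw [hLadd, hLsmul _ _ (hhS _ (hfS x))]
    ring
  -- f ∘ G = g ∘ f
  have hfG : ∀ x, f (G x) = f x + b * h (f x) := by
    intro x
    have := htr x (h (f x)) (hhS _ (hfS x))
    simp only [hG]
    linear_combination this
  have hSfin : S.Finite := Set.toFinite S
  have hmaps : Set.MapsTo (fun u : F => u + b * h u) S S := by
    intro u hu
    simp only [hS, Set.mem_setOf_eq] at *
    rw [add_pow_char_pow, mul_pow, hu, hb, hh u hu]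
  rw [hkey, Function.Bijective.of_comp_iff' hLbij]
  constructor
  · -- G bijective → g bijective on S
    intro hGbij
    rcases eq_or_ne b 0 with hb0 | hb0
    · simp only [hb0, zero_mul, add_zero]
      exact Set.bijOn_id S
    · rw [← hSfin.surjOn_iff_bijOn_of_mapsTo hmaps]
      intro s hs
      -- find x with f x = s
      have hbinv : b⁻¹ ∈ S := by
        simp only [hS, Set.mem_setOf_eq]
        rw [inv_pow, hb]
      have husub : s - f 0 ∈ S := by
        simp only [hS, Set.mem_setOf_eq] at *
        rw [sub_pow_char_pow, hs, hf 0]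
      set u := (s - f 0) * b⁻¹ with hu
      have huS : u ∈ S := hSmul _ _ husub hbinv
      have hfu : f (u * γ) = s := by
        have := htr 0 u huS
        rw [zero_add] at this
        have hub : u * b = s - f 0 := by
          rw [hu, mul_assoc, inv_mul_cancel₀ hb0, mul_one]
        rw [hub] at this
        linear_combination this
      obtain ⟨x, hx⟩ := hGbij.surjective (u * γ)
      refine ⟨f x, hfS x, ?_⟩
      have := hfG x
      rw [hx] at this
      simp only [Set.mem_setOf_eq]
      rw [← this, hfu]
    -- done
  · -- g bijective on S → G bijective
    intro hgbij
    rw [Finite.injective_iff_bijective.symm] at *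
    intro x y hxy
    have h1 : f (G x) = f (G y) := by rw [hxy]
    rw [hfG, hfG] at h1
    have h2 : f x = f y :=
      hgbij.injOn (hfS x) (hfS y) h1
    have : x + h (f x) * γ = y + h (f y) * γ := hxy
    rw [h2] at this
    exact add_right_cancel this
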